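/- There exists c > 0 such that for all z ∈ ℂ with z ≠ 0 and |Im(z)| ≤ 1, one has ‖ẽ_z‖_{L²(0,ℓ)} ≤ c/|z|. -/

import Mathlib

open Complex

/-- There is `c > 0` such that for all `z ≠ 0` with `|Im z| ≤ 1` one has
`‖ẽ_z‖_{L²(0,ℓ)} ≤ c / |z|`. -/
theorem norm_tilde_ez (ℓ : ℝ) (hℓ : 0 < ℓ)
    (ez' : ℂ → ℝ → ℂ)
    (hez' : ez' = fun (w : ℂ) (x : ℝ) =>
      (1 / (2 * I * w)) * ((ℓ : ℂ) - x)
        * (exp (I * w * x) - exp (2 * I * w * ℓ) * exp (-(I * w * x)))) :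
    ∃ c > 0, ∀ z : ℂ, z ≠ 0 → |z.im| ≤ 1 →
      Real.sqrt (∫ x in (0:ℝ)..ℓ, ‖ez' z x‖ ^ 2) ≤ c / ‖z‖ := by
  subst hez'
  refine ⟨Real.sqrt ℓ * (ℓ * Real.exp (3 * ℓ)), by positivity, ?_⟩
  intro z hz him
  have hzabs : 0 < ‖z‖ := norm_pos_iff.2 hz
  set M : ℝ := ℓ * Real.exp (3 * ℓ) / ‖z‖ with hM
  have hM0 : 0 ≤ M := by positivity
  have hb : ∀ x ∈ Set.Icc (0:ℝ) ℓ,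
      ‖(1 / (2 * I * z)) * ((ℓ : ℂ) - x)
        * (exp (I * z * x) - exp (2 * I * z * ℓ) * exp (-(I * z * x)))‖ ≤ M := by
    intro x hx
    obtain ⟨hx0, hxl⟩ := hx
    have h1 : ‖(1 / (2 * I * z))‖ = 1 / (2 * ‖z‖) := by
      simp [norm_div, map_mul]
    have h2 : ‖((ℓ : ℂ) - x)‖ ≤ ℓ := by
      rw [show ((ℓ : ℂ) - x) = ((ℓ - x : ℝ) : ℂ) by push_cast; ring]
      rw [Complex.norm_real, Real.norm_eq_abs, _root_.abs_of_nonneg (by linarith : (0:ℝ) ≤ ℓ - x)]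
      linarith
    have hexp : ∀ w : ℂ, ‖exp w‖ = Real.exp w.re := fun w => Complex.norm_exp w
    have hA : ‖exp (I * z * x)‖ ≤ Real.exp (3 * ℓ) := by
      rw [hexp]
      apply Real.exp_le_exp.2
      have : (I * z * (x:ℂ)).re = -z.im * x := by simp [Complex.mul_re]
      rw [this]
      nlinarith [abs_le.1 him, neg_abs_le z.im, le_abs_self z.im]
    have hB : ‖exp (2 * I * z * ℓ) * exp (-(I * z * x))‖ ≤ Real.exp (3 * ℓ) := by
      rw [norm_mul, hexp, hexp, ← Real.exp_add]
      apply Real.exp_le_exp.2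
      have h1' : (2 * I * z * (ℓ:ℂ)).re = -2 * z.im * ℓ := by simp [Complex.mul_re]
      have h2' : (-(I * z * (x:ℂ))).re = z.im * x := by simp [Complex.mul_re]
      rw [h1', h2']
      nlinarith [abs_le.1 him, neg_abs_le z.im, le_abs_self z.im]
    have h3 : ‖exp (I * z * x) - exp (2 * I * z * ℓ) * exp (-(I * z * x))‖
        ≤ 2 * Real.exp (3 * ℓ) := by
      calc _ ≤ ‖exp (I * z * x)‖ + ‖exp (2 * I * z * ℓ) * exp (-(I * z * x))‖ :=
            norm_sub_le _ _
        _ ≤ 2 * Real.exp (3 * ℓ) := by linarith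
    calc ‖(1 / (2 * I * z)) * ((ℓ : ℂ) - x)
        * (exp (I * z * x) - exp (2 * I * z * ℓ) * exp (-(I * z * x)))‖
        = ‖(1 / (2 * I * z))‖ * ‖((ℓ : ℂ) - x)‖
          * ‖(exp (I * z * x) - exp (2 * I * z * ℓ) * exp (-(I * z * x)))‖ := by
          rw [norm_mul, norm_mul]
      _ ≤ (1 / (2 * ‖z‖)) * ℓ * (2 * Real.exp (3 * ℓ)) := by
          rw [h1]
          gcongr
      _ = M := by rw [hM]; field_simp
  have hcont : Continuous fun x : ℝ => ‖(1 / (2 * I * z)) * ((ℓ : ℂ) - x)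
      * (exp (I * z * x) - exp (2 * I * z * ℓ) * exp (-(I * z * x)))‖ ^ 2 := by
    fun_prop
  have hint : ∫ x in (0:ℝ)..ℓ, ‖(1 / (2 * I * z)) * ((ℓ : ℂ) - x)
      * (exp (I * z * x) - exp (2 * I * z * ℓ) * exp (-(I * z * x)))‖ ^ 2
      ≤ ∫ _ in (0:ℝ)..ℓ, M ^ 2 := by
    apply intervalIntegral.integral_mono_on hℓ.le
    · exact (hcont.intervalIntegrable _ _)
    · exact intervalIntegrable_const
    · intro x hx
      have := hb x hx
      have h0 := norm_nonneg ((1 / (2 * I * z)) * ((ℓ : ℂ) - x)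
        * (exp (I * z * x) - exp (2 * I * z * ℓ) * exp (-(I * z * x))))
      nlinarith
  have hconst : ∫ _ in (0:ℝ)..ℓ, M ^ 2 = ℓ * M ^ 2 := by
    simp
  calc Real.sqrt (∫ x in (0:ℝ)..ℓ, ‖(1 / (2 * I * z)) * ((ℓ : ℂ) - x)
      * (exp (I * z * x) - exp (2 * I * z * ℓ) * exp (-(I * z * x)))‖ ^ 2)
      ≤ Real.sqrt (ℓ * M ^ 2) := by
        apply Real.sqrt_le_sqrt
        rw [← hconst]; exact hint
    _ = Real.sqrt ℓ * M := by
        rw [Real.sqrt_mul hℓ.le, Real.sqrt_sq hM0]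
    _ = Real.sqrt ℓ * (ℓ * Real.exp (3 * ℓ)) / ‖z‖ := by
        rw [hM]; ring
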